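/- The number of symmetric noncrossing perfect matchings on the set [±n] = {−n,...,−1,1,...,n} equals the central binomial coefficient C(n, ⌊n/2⌋). -/

import Mathlib

/-- The set `[±n] = {-n, …, -1, 1, …, n}`. -/
def pmSet (n : ℕ) : Set ℤ := {i | i ≠ 0 ∧ |i| ≤ (n : ℤ)}

/-- A symmetric noncrossing perfect matching on `[±n]`: a set `M` of pairwise disjoint
2-element subsets of `[±n]` covering `[±n]`, closed under negation, with no two blocks
`{i,k}, {j,l}` satisfying `i < j < k < l`. -/
def IsNCSP (n : ℕ) (M : Finset (Finset ℤ)) : Prop :=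
  (∀ b ∈ M, b.card = 2 ∧ (b : Set ℤ) ⊆ pmSet n) ∧
  (∀ b ∈ M, ∀ b' ∈ M, b ≠ b' → Disjoint b b') ∧
  (∀ i ∈ pmSet n, ∃ b ∈ M, i ∈ b) ∧
  (∀ b ∈ M, b.image (fun x => -x) ∈ M) ∧
  (∀ i j k l : ℤ, ({i, k} : Finset ℤ) ∈ M → ({j, l} : Finset ℤ) ∈ M →
    i < j → j < k → k < l → False)

namespace NCSPaux
open Finset

section Seq
/-- step of the lattice path encoded by `w` -/
def ee (n : ℕ) (w : Fin n → Bool) (s : ℕ) : ℤ :=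
  if h : s < n then (if w ⟨s, h⟩ then 1 else -1) else 0

/-- height of the lattice path after `t` steps -/
def SS (n : ℕ) (w : Fin n → Bool) (t : ℕ) : ℤ := ∑ s ∈ Finset.range t, ee n w s

def good (n : ℕ) (w : Fin n → Bool) : Prop := ∀ t, 0 ≤ SS n w t

def matched (n : ℕ) (w : Fin n → Bool) (p q : ℕ) : Prop :=
  p < q ∧ q < n ∧ ee n w p = 1 ∧ ee n w q = -1 ∧ SS n w (q+1) = SS n w p ∧
    ∀ t, p < t → t ≤ q → SS n w p < SS n w t

def centered (n : ℕ) (w : Fin n → Bool) (p : ℕ) : Prop :=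
  p < n ∧ ee n w p = 1 ∧ ∀ t, p < t → t ≤ n → SS n w p < SS n w t

variable {n : ℕ} {w : Fin n → Bool}

lemma ee_cases (s : ℕ) (hs : s < n) : ee n w s = 1 ∨ ee n w s = -1 := by
  unfold ee; rw [dif_pos hs]; by_cases h : w ⟨s, hs⟩ <;> simp [h]

lemma ee_zero {s : ℕ} (hs : n ≤ s) : ee n w s = 0 := by
  unfold ee; rw [dif_neg (by omega)]

lemma ee_lt_n {s : ℕ} (h : ee n w s = 1 ∨ ee n w s = -1) : s < n := by
  by_contra hs
  rw [ee_zero (by omega)] at h; omega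

lemma SS_succ (t : ℕ) : SS n w (t+1) = SS n w t + ee n w t := by
  unfold SS; rw [Finset.sum_range_succ]

lemma SS_zero : SS n w 0 = 0 := by simp [SS]

lemma SS_stable {t : ℕ} (h : n ≤ t) : SS n w t = SS n w n := by
  induction t with
  | zero => have : n = 0 := by omega
            simp [this]
  | succ t ih =>
    rcases Nat.lt_or_ge n (t+1) with h'|h'
    · have ht : n ≤ t := by omega
      rw [SS_succ, ih ht, ee_zero ht]
      omega
    · have hn : n = t + 1 := by omega
      have := congrArg (SS n w) hn
      omega

/-- discrete IVT, ascending -/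
lemma ivt (a b : ℕ) (v : ℤ) (hab : a ≤ b) (ha : SS n w a ≤ v) (hb : v ≤ SS n w b) :
    ∃ t, a ≤ t ∧ t ≤ b ∧ SS n w t = v := by
  induction b with
  | zero =>
    have : a = 0 := by omega
    subst this
    exact ⟨0, le_refl _, le_refl _, by omega⟩
  | succ b ih =>
    rcases Nat.lt_or_ge b a with h'|h'
    · have : a = b + 1 := by omega
      subst this
      exact ⟨b+1, le_refl _, le_refl _, by omega⟩
    · rcases le_or_gt v (SS n w b) with h''|h''
      · obtain ⟨t, h1, h2, h3⟩ := ih h' h''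
        exact ⟨t, h1, by omega, h3⟩
      · have hstep := SS_succ (n := n) (w := w) b
        have : ee n w b ≤ 1 := by
          rcases Nat.lt_or_ge b n with hh|hh
          · rcases ee_cases (w := w) b hh with h|h <;> omega
          · rw [ee_zero hh]; omega
        exact ⟨b+1, by omega, le_refl _, by omega⟩

/-- discrete IVT, descending -/
lemma ivt' (a b : ℕ) (v : ℤ) (hab : a ≤ b) (ha : v ≤ SS n w a) (hb : SS n w b ≤ v) :
    ∃ t, a ≤ t ∧ t ≤ b ∧ SS n w t = v := by
  induction b with
  | zero =>
    have : a = 0 := by omega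
    subst this
    exact ⟨0, le_refl _, le_refl _, by omega⟩
  | succ b ih =>
    rcases Nat.lt_or_ge b a with h'|h'
    · have : a = b + 1 := by omega
      subst this
      exact ⟨b+1, le_refl _, le_refl _, by omega⟩
    · rcases le_or_gt (SS n w b) v with h''|h''
      · obtain ⟨t, h1, h2, h3⟩ := ih h' h''
        exact ⟨t, h1, by omega, h3⟩
      · have hstep := SS_succ (n := n) (w := w) b
        have : -1 ≤ ee n w b := by
          rcases Nat.lt_or_ge b n with hh|hh
          · rcases ee_cases (w := w) b hh with h|h <;> omega
          · rw [ee_zero hh]; omega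
        exact ⟨b+1, by omega, le_refl _, by omega⟩

/-- every down-step has a matching up-step, given nonnegativity -/
lemma closer_exists (hg : good n w) {t : ℕ} (ht : ee n w t = -1) : ∃ p, matched n w p t := by
  have htn : t < n := ee_lt_n (Or.inr ht)
  have hstep := SS_succ (n := n) (w := w) t
  set v := SS n w (t+1) with hvdef
  have hv : v = SS n w t - 1 := by omega
  have hne : ∃ p, p ≤ t ∧ SS n w p = v := by
    obtain ⟨p, h1, h2, h3⟩ := ivt (n:=n) (w:=w) 0 t v (by omega)
      (by rw [SS_zero]; exact hg (t+1)) (by omega)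
    exact ⟨p, h2, h3⟩
  classical
  set T := (Finset.range (t+1)).filter (fun p => SS n w p = v) with hT
  have hTne : T.Nonempty := by
    obtain ⟨p, h1, h2⟩ := hne
    exact ⟨p, by simp only [hT, Finset.mem_filter, Finset.mem_range]; exact ⟨by omega, h2⟩⟩
  set j := T.max' hTne with hj
  have hjmem : j ∈ T := T.max'_mem hTne
  simp only [hT, Finset.mem_filter, Finset.mem_range] at hjmem
  obtain ⟨hjle', hjv⟩ := hjmem
  have hjle : j ≤ t := by omega
  have hjlt : j < t := by
    rcases Nat.lt_or_ge j t with h|h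
    · exact h
    · exfalso; have : j = t := by omega
      rw [this] at hjv; omega
  have hmid : ∀ s, j < s → s ≤ t → v < SS n w s := by
    intro s hs1 hs2
    by_contra hc
    push_neg at hc
    obtain ⟨r, hr1, hr2, hr3⟩ := ivt s t v hs2 hc (by omega)
    have : r ∈ T := by
      simp only [hT, Finset.mem_filter, Finset.mem_range]; exact ⟨by omega, hr3⟩
    have := T.le_max' r this
    omega
  have hej : ee n w j = 1 := by
    have h1 : v < SS n w (j+1) := hmid (j+1) (by omega) (by omega)
    have h2 := SS_succ (n := n) (w := w) j
    rcases ee_cases (w := w) j (by omega) with h|h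
    · exact h
    · omega
  refine ⟨j, hjlt, htn, hej, ht, by omega, ?_⟩
  intro s hs1 hs2
  have := hmid s hs1 hs2
  omega

/-- every up-step is either matched to a down-step or is never closed -/
lemma opener_cases {t : ℕ} (ht : ee n w t = 1) : (∃ q, matched n w t q) ∨ centered n w t := by
  classical
  have htn : t < n := ee_lt_n (Or.inl ht)
  have hstept := SS_succ (n := n) (w := w) t
  by_cases hc : ∀ s, t < s → s ≤ n → SS n w t < SS n w s
  · exact Or.inr ⟨htn, ht, hc⟩
  · left
    push_neg at hc
    obtain ⟨s, hs1, hs2, hs3⟩ := hc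
    have hex : ∃ r, t + 1 ≤ r ∧ r ≤ s ∧ SS n w r = SS n w t :=
      ivt' (t+1) s (SS n w t) (by omega) (by omega) hs3
    set U := (Finset.range (s+1)).filter (fun r => t + 1 ≤ r ∧ SS n w r = SS n w t) with hU
    have hUne : U.Nonempty := by
      obtain ⟨r, h1, h2, h3⟩ := hex
      exact ⟨r, by simp only [hU, Finset.mem_filter, Finset.mem_range]
                   exact ⟨by omega, h1, h3⟩⟩
    set m := U.min' hUne with hm
    have hmmem : m ∈ U := U.min'_mem hUne
    simp only [hU, Finset.mem_filter, Finset.mem_range] at hmmem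
    obtain ⟨hm1, hm2, hm3⟩ := hmmem
    have hmt : t + 2 ≤ m := by
      rcases Nat.lt_or_ge (t+1) m with h|h
      · omega
      · exfalso
        have : m = t + 1 := by omega
        rw [this] at hm3
        omega
    have hmid : ∀ r, t < r → r < m → SS n w t < SS n w r := by
      intro r hr1 hr2
      by_contra hcc
      push_neg at hcc
      obtain ⟨r', h1, h2, h3⟩ := ivt' (t+1) r (SS n w t) (by omega) (by omega) hcc
      have : r' ∈ U := by
        simp only [hU, Finset.mem_filter, Finset.mem_range]
        exact ⟨by omega, h1, h3⟩
      have := U.min'_le r' this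
      omega
    have heq : ee n w (m-1) = -1 := by
      have h1 : SS n w t < SS n w (m-1) := hmid (m-1) (by omega) (by omega)
      have h2 := SS_succ (n := n) (w := w) (m-1)
      have h3 : m - 1 + 1 = m := by omega
      rw [h3] at h2
      rcases Nat.lt_or_ge (m-1) n with hh|hh
      · rcases ee_cases (w := w) (m-1) hh with h|h
        · omega
        · exact h
      · exfalso
        rw [ee_zero hh] at h2
        omega
    refine ⟨m - 1, by omega, ee_lt_n (Or.inr heq), ht, heq, by rw [show m - 1 + 1 = m by omega]; omega, ?_⟩
    intro r hr1 hr2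
    exact hmid r hr1 (by omega)

lemma matched_right_unique {p q q' : ℕ} (h : matched n w p q) (h' : matched n w p q') : q = q' := by
  have h1 := h.1
  have h5 := h.2.2.2.2.1
  have h6 := h.2.2.2.2.2
  have h1' := h'.1
  have h5' := h'.2.2.2.2.1
  have h6' := h'.2.2.2.2.2
  by_contra hne
  rcases Nat.lt_or_ge q q' with hh|hh
  · have := h6' (q+1) (by omega) (by omega); omega
  · have := h6 (q'+1) (by omega) (by omega); omega

lemma matched_left_unique {p p' q : ℕ} (h : matched n w p q) (h' : matched n w p' q) : p = p' := by
  have h1 := h.1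
  have h5 := h.2.2.2.2.1
  have h6 := h.2.2.2.2.2
  have h1' := h'.1
  have h5' := h'.2.2.2.2.1
  have h6' := h'.2.2.2.2.2
  by_contra hne
  rcases Nat.lt_or_ge p p' with hh|hh
  · have := h6 p' (by omega) (by omega); omega
  · have := h6' p (by omega) (by omega); omega

lemma matched_not_centered_left {p q : ℕ} (h : matched n w p q) : ¬ centered n w p := by
  intro hc
  have h2 := h.2.1
  have h1 := h.1
  have h5 := h.2.2.2.2.1
  have := hc.2.2 (q+1) (by omega) (by omega)
  omega

lemma matched_not_centered_right {p q : ℕ} (h : matched n w p q) : ¬ centered n w q := by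
  intro hc
  have h3 := hc.2.1
  have h4 := h.2.2.2.1
  omega

/-- crossing of two matched pairs is impossible -/
lemma no_cross_mm {p q r s : ℕ} (h : matched n w p q) (h' : matched n w r s)
    (h1 : p < r) (h2 : r < q) (h3 : q < s) : False := by
  have hA : SS n w p < SS n w r := h.2.2.2.2.2 r h1 (by omega)
  have hB : SS n w r < SS n w (q+1) := h'.2.2.2.2.2 (q+1) (by omega) (by omega)
  have hC := h.2.2.2.2.1
  omega

/-- a matched pair cannot cover a centered point -/
lemma no_cross_mc {r s c : ℕ} (h : matched n w r s) (hc : centered n w c)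
    (h1 : r < c) (h2 : c < s) : False := by
  have hsn := h.2.1
  have hA : SS n w r < SS n w c := h.2.2.2.2.2 c h1 (by omega)
  have hB : SS n w c < SS n w (s+1) := hc.2.2 (s+1) (by omega) (by omega)
  have hC := h.2.2.2.2.1
  omega

end Seq

section PhiDef
open Classical in
noncomputable def Phi (n : ℕ) (w : Fin n → Bool) : Finset (Finset ℤ) :=
  (((range n ×ˢ range n).filter fun pq => matched n w pq.1 pq.2).image
    fun pq : ℕ × ℕ => ({((pq.1 : ℤ) + 1), ((pq.2 : ℤ) + 1)} : Finset ℤ)) ∪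
  (((range n ×ˢ range n).filter fun pq => matched n w pq.1 pq.2).image
    fun pq : ℕ × ℕ => ({(-((pq.2 : ℤ) + 1)), (-((pq.1 : ℤ) + 1))} : Finset ℤ)) ∪
  (((range n).filter fun p => centered n w p).image
    fun p : ℕ => ({(-((p : ℤ) + 1)), ((p : ℤ) + 1)} : Finset ℤ))

variable {n : ℕ} {w : Fin n → Bool}

lemma mem_Phi_cases {B : Finset ℤ} (hB : B ∈ Phi n w) :
    (∃ p q, matched n w p q ∧ B = {((p : ℤ) + 1), ((q : ℤ) + 1)}) ∨
    (∃ p q, matched n w p q ∧ B = {(-((q : ℤ) + 1)), (-((p : ℤ) + 1))}) ∨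
    (∃ p, centered n w p ∧ B = {(-((p : ℤ) + 1)), ((p : ℤ) + 1)}) := by
  classical
  unfold Phi at hB
  rcases Finset.mem_union.mp hB with hB' | hB'
  · rcases Finset.mem_union.mp hB' with hB'' | hB''
    · obtain ⟨⟨p,q⟩, hpq, he⟩ := Finset.mem_image.mp hB''
      exact Or.inl ⟨p, q, (Finset.mem_filter.mp hpq).2, he.symm⟩
    · obtain ⟨⟨p,q⟩, hpq, he⟩ := Finset.mem_image.mp hB''
      exact Or.inr (Or.inl ⟨p, q, (Finset.mem_filter.mp hpq).2, he.symm⟩)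
  · obtain ⟨p, hp, he⟩ := Finset.mem_image.mp hB'
    exact Or.inr (Or.inr ⟨p, (Finset.mem_filter.mp hp).2, he.symm⟩)

lemma pos_pair_mem_Phi {p q : ℕ} (h : matched n w p q) :
    ({((p : ℤ) + 1), ((q : ℤ) + 1)} : Finset ℤ) ∈ Phi n w := by
  classical
  unfold Phi
  refine Finset.mem_union.mpr (Or.inl (Finset.mem_union.mpr (Or.inl (Finset.mem_image.mpr ⟨⟨p,q⟩, ?_, rfl⟩))))
  refine Finset.mem_filter.mpr ⟨Finset.mem_product.mpr ⟨?_, ?_⟩, h⟩ <;>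
    simp only [Finset.mem_range] <;> [skip; exact h.2.1]
  have := h.1; have := h.2.1; omega

lemma neg_pair_mem_Phi {p q : ℕ} (h : matched n w p q) :
    ({(-((q : ℤ) + 1)), (-((p : ℤ) + 1))} : Finset ℤ) ∈ Phi n w := by
  classical
  unfold Phi
  refine Finset.mem_union.mpr (Or.inl (Finset.mem_union.mpr (Or.inr (Finset.mem_image.mpr ⟨⟨p,q⟩, ?_, rfl⟩))))
  refine Finset.mem_filter.mpr ⟨Finset.mem_product.mpr ⟨?_, ?_⟩, h⟩ <;>
    simp only [Finset.mem_range] <;> [skip; exact h.2.1]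
  have := h.1; have := h.2.1; omega

lemma cent_mem_Phi {p : ℕ} (h : centered n w p) :
    ({(-((p : ℤ) + 1)), ((p : ℤ) + 1)} : Finset ℤ) ∈ Phi n w := by
  classical
  unfold Phi
  refine Finset.mem_union.mpr (Or.inr (Finset.mem_image.mpr ⟨p, ?_, rfl⟩))
  exact Finset.mem_filter.mpr ⟨Finset.mem_range.mpr h.1, h⟩

lemma pair_eq {a b c d : ℤ} (h : ({a,b} : Finset ℤ) = {c,d}) :
    (a = c ∧ b = d) ∨ (a = d ∧ b = c) := by
  have ha : a ∈ ({c,d} : Finset ℤ) := h ▸ (Finset.mem_insert_self a {b})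
  have hb : b ∈ ({c,d} : Finset ℤ) := h ▸ (Finset.mem_insert.mpr (Or.inr (Finset.mem_singleton_self b)))
  have hc : c ∈ ({a,b} : Finset ℤ) := h ▸ (Finset.mem_insert_self c {d})
  have hd : d ∈ ({a,b} : Finset ℤ) := h ▸ (Finset.mem_insert.mpr (Or.inr (Finset.mem_singleton_self d)))
  simp only [Finset.mem_insert, Finset.mem_singleton] at ha hb hc hd
  rcases ha with h1|h1 <;> rcases hb with h2|h2 <;> omega

lemma mem_pair {x a b : ℤ} : x ∈ ({a,b} : Finset ℤ) ↔ x = a ∨ x = b := by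
  simp [Finset.mem_insert, Finset.mem_singleton]


variable {n : ℕ} {w : Fin n → Bool}

end PhiDef

section PhiNCSP
variable {n : ℕ} {w : Fin n → Bool}


/-- if two blocks of `Phi` intersect, they are equal -/
lemma Phi_blocks_eq {B B' : Finset ℤ} (hB : B ∈ Phi n w) (hB' : B' ∈ Phi n w)
    {x : ℤ} (hx : x ∈ B) (hx' : x ∈ B') : B = B' := by
  -- helper facts about roles
  have role : ∀ (p q p' q' : ℕ), matched n w p q → matched n w p' q' →
      (p = p' ∨ p = q' ∨ q = p' ∨ q = q') → p = p' ∧ q = q' := by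
    intro p q p' q' h h' hor
    rcases hor with h1|h1|h1|h1
    · subst h1; exact ⟨rfl, matched_right_unique h h'⟩
    · exfalso; subst h1; have := h.2.2.1; have := h'.2.2.2.1; omega
    · exfalso; subst h1; have := h.2.2.2.1; have := h'.2.2.1; omega
    · subst h1; exact ⟨matched_left_unique h h', rfl⟩
  rcases mem_Phi_cases hB with ⟨p,q,hm,rfl⟩|⟨p,q,hm,rfl⟩|⟨p,hm,rfl⟩ <;>
    rcases mem_Phi_cases hB' with ⟨p',q',hm',rfl⟩|⟨p',q',hm',rfl⟩|⟨p',hm',rfl⟩ <;>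
    rw [mem_pair] at hx hx'
  -- pos/pos
  · obtain ⟨rfl, rfl⟩ := role p q p' q' hm hm' (by omega)
    rfl
  -- pos/neg : impossible sign
  · exfalso; omega
  -- pos/cent : share positive element p+1 = p'+1 ⇒ contradiction with roles
  · exfalso
    have hpp' : p = p' ∨ q = p' := by omega
    rcases hpp' with rfl|rfl
    · exact matched_not_centered_left hm hm'
    · exact matched_not_centered_right hm hm'
  -- neg/pos
  · exfalso; omega
  -- neg/neg
  · obtain ⟨rfl, rfl⟩ := role p q p' q' hm hm' (by omega)
    rfl
  -- neg/cent : share negative element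
  · exfalso
    have hpp' : p = p' ∨ q = p' := by omega
    rcases hpp' with rfl|rfl
    · exact matched_not_centered_left hm hm'
    · exact matched_not_centered_right hm hm'
  -- cent/pos
  · exfalso
    have hpp' : p = p' ∨ p = q' := by omega
    rcases hpp' with rfl|rfl
    · exact matched_not_centered_left hm' hm
    · exact matched_not_centered_right hm' hm
  -- cent/neg
  · exfalso
    have hpp' : p = q' ∨ p = p' := by omega
    rcases hpp' with rfl|rfl
    · exact matched_not_centered_right hm' hm
    · exact matched_not_centered_left hm' hm
  -- cent/cent
  · have : p = p' := by omega
    subst this; rfl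

theorem Phi_isNCSP (hg : good n w) : IsNCSP n (Phi n w) := by
  refine ⟨?_, ?_, ?_, ?_, ?_⟩
  -- blocks: card 2 and inside pmSet
  · intro b hb
    rcases mem_Phi_cases hb with ⟨p,q,hm,rfl⟩|⟨p,q,hm,rfl⟩|⟨p,hm,rfl⟩
    · constructor
      · rw [Finset.card_insert_of_notMem (by rw [Finset.mem_singleton]; have := hm.1; omega),
          Finset.card_singleton]
      · intro x hx
        simp only [Finset.coe_insert, Finset.coe_singleton, Set.mem_insert_iff,
          Set.mem_singleton_iff] at hx
        have h1 := hm.1; have h2 := hm.2.1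
        rcases hx with rfl|rfl <;> · simp only [pmSet, Set.mem_setOf_eq, abs_le]; omega
    · constructor
      · rw [Finset.card_insert_of_notMem (by rw [Finset.mem_singleton]; have := hm.1; omega),
          Finset.card_singleton]
      · intro x hx
        simp only [Finset.coe_insert, Finset.coe_singleton, Set.mem_insert_iff,
          Set.mem_singleton_iff] at hx
        have h1 := hm.1; have h2 := hm.2.1
        rcases hx with rfl|rfl <;> · simp only [pmSet, Set.mem_setOf_eq, abs_le]; omega
    · constructor
      · rw [Finset.card_insert_of_notMem (by rw [Finset.mem_singleton]; omega),
          Finset.card_singleton]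
      · intro x hx
        simp only [Finset.coe_insert, Finset.coe_singleton, Set.mem_insert_iff,
          Set.mem_singleton_iff] at hx
        have h1 := hm.1
        rcases hx with rfl|rfl <;> · simp only [pmSet, Set.mem_setOf_eq, abs_le]; omega
  -- disjointness
  · intro b hb b' hb' hne
    rw [Finset.disjoint_left]
    intro x hx hx'
    exact hne (Phi_blocks_eq hb hb' hx hx')
  -- cover
  · intro x hx
    obtain ⟨hx0, hxn⟩ := hx
    rcases lt_or_gt_of_ne hx0 with hneg|hpos
    · -- x < 0
      set t := (-x - 1).toNat with htdef
      have htx : (t : ℤ) = -x - 1 := by omega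
      have htn : t < n := by
        have : |x| = -x := abs_of_neg hneg
        omega
      rcases ee_cases (w := w) t htn with h1|h1
      · rcases opener_cases h1 with ⟨q, hq⟩|hc
        · exact ⟨_, neg_pair_mem_Phi hq, by rw [mem_pair]; right; omega⟩
        · exact ⟨_, cent_mem_Phi hc, by rw [mem_pair]; left; omega⟩
      · obtain ⟨p, hp⟩ := closer_exists hg h1
        exact ⟨_, neg_pair_mem_Phi hp, by rw [mem_pair]; left; omega⟩
    · -- x > 0
      set t := (x - 1).toNat with htdef
      have htx : (t : ℤ) = x - 1 := by omega
      have htn : t < n := by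
        have : |x| = x := abs_of_pos hpos
        omega
      rcases ee_cases (w := w) t htn with h1|h1
      · rcases opener_cases h1 with ⟨q, hq⟩|hc
        · exact ⟨_, pos_pair_mem_Phi hq, by rw [mem_pair]; left; omega⟩
        · exact ⟨_, cent_mem_Phi hc, by rw [mem_pair]; right; omega⟩
      · obtain ⟨p, hp⟩ := closer_exists hg h1
        exact ⟨_, pos_pair_mem_Phi hp, by rw [mem_pair]; right; omega⟩
  -- symmetry
  · intro b hb
    have himg : ∀ a c : ℤ, ({a, c} : Finset ℤ).image (fun x => -x) = {-a, -c} := by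
      intro a c
      rw [Finset.image_insert, Finset.image_singleton]
    rcases mem_Phi_cases hb with ⟨p,q,hm,rfl⟩|⟨p,q,hm,rfl⟩|⟨p,hm,rfl⟩
    · rw [himg]
      have : ({-((p:ℤ)+1), -((q:ℤ)+1)} : Finset ℤ) = {-((q:ℤ)+1), -((p:ℤ)+1)} :=
        Finset.pair_comm _ _
      rw [this]; exact neg_pair_mem_Phi hm
    · rw [himg]
      have : ({-(-((q:ℤ)+1)), -(-((p:ℤ)+1))} : Finset ℤ) = {((p:ℤ)+1), ((q:ℤ)+1)} := by
        rw [neg_neg, neg_neg]; exact Finset.pair_comm _ _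
      rw [this]; exact pos_pair_mem_Phi hm
    · rw [himg]
      have : ({-(-((p:ℤ)+1)), -((p:ℤ)+1)} : Finset ℤ) = {-((p:ℤ)+1), ((p:ℤ)+1)} := by
        rw [neg_neg]; exact Finset.pair_comm _ _
      rw [this]; exact cent_mem_Phi hm
  -- noncrossing
  · intro i j k l hik hjl hij hjk hkl
    rcases mem_Phi_cases hik with ⟨p,q,hm,he⟩|⟨p,q,hm,he⟩|⟨p,hm,he⟩ <;>
      rcases mem_Phi_cases hjl with ⟨p',q',hm',he'⟩|⟨p',q',hm',he'⟩|⟨p',hm',he'⟩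
    -- pos/pos
    · have h1 := hm.1; have h1' := hm'.1
      rcases pair_eq he with ⟨e1,e2⟩|⟨e1,e2⟩ <;> rcases pair_eq he' with ⟨e3,e4⟩|⟨e3,e4⟩ <;>
        [skip; omega; omega; omega]
      exact no_cross_mm hm hm' (by omega) (by omega) (by omega)
    -- pos/neg : j < 0 < i impossible
    · have h1 := hm.1; have h1' := hm'.1
      rcases pair_eq he with ⟨e1,e2⟩|⟨e1,e2⟩ <;> rcases pair_eq he' with ⟨e3,e4⟩|⟨e3,e4⟩ <;> omega
    -- pos/cent
    · have h1 := hm.1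
      rcases pair_eq he with ⟨e1,e2⟩|⟨e1,e2⟩ <;> rcases pair_eq he' with ⟨e3,e4⟩|⟨e3,e4⟩ <;> omega
    -- neg/pos : need j < k with k < 0 < j impossible
    · have h1 := hm.1; have h1' := hm'.1
      rcases pair_eq he with ⟨e1,e2⟩|⟨e1,e2⟩ <;> rcases pair_eq he' with ⟨e3,e4⟩|⟨e3,e4⟩ <;> omega
    -- neg/neg
    · have h1 := hm.1; have h1' := hm'.1
      rcases pair_eq he with ⟨e1,e2⟩|⟨e1,e2⟩ <;> rcases pair_eq he' with ⟨e3,e4⟩|⟨e3,e4⟩ <;>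
        [skip; omega; omega; omega]
      exact no_cross_mm hm' hm (by omega) (by omega) (by omega)
    -- neg/cent
    · have h1 := hm.1
      rcases pair_eq he with ⟨e1,e2⟩|⟨e1,e2⟩ <;> rcases pair_eq he' with ⟨e3,e4⟩|⟨e3,e4⟩ <;>
        [skip; omega; omega; omega]
      exact no_cross_mc hm hm' (by omega) (by omega)
    -- cent/pos
    · have h1' := hm'.1
      rcases pair_eq he with ⟨e1,e2⟩|⟨e1,e2⟩ <;> rcases pair_eq he' with ⟨e3,e4⟩|⟨e3,e4⟩ <;>
        [skip; omega; omega; omega]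
      exact no_cross_mc hm' hm (by omega) (by omega)
    -- cent/neg
    · have h1' := hm'.1
      rcases pair_eq he with ⟨e1,e2⟩|⟨e1,e2⟩ <;> rcases pair_eq he' with ⟨e3,e4⟩|⟨e3,e4⟩ <;> omega
    -- cent/cent
    · rcases pair_eq he with ⟨e1,e2⟩|⟨e1,e2⟩ <;> rcases pair_eq he' with ⟨e3,e4⟩|⟨e3,e4⟩ <;> omega

end PhiNCSP

section PhiInj
variable {n : ℕ} {w : Fin n → Bool}


lemma ee_one_of_Phi_eq {w' : Fin n → Bool} (hg : good n w) (hP : Phi n w = Phi n w')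
    {t : ℕ} (ht : ee n w t = 1) : ee n w' t = 1 := by
  rcases opener_cases ht with ⟨q, hq⟩|hc
  · have hmem : ({((t : ℤ) + 1), ((q : ℤ) + 1)} : Finset ℤ) ∈ Phi n w' :=
      hP ▸ pos_pair_mem_Phi hq
    have h1 := hq.1
    rcases mem_Phi_cases hmem with ⟨p',q',hm',he⟩|⟨p',q',hm',he⟩|⟨p',hm',he⟩
    · have h1' := hm'.1
      rcases pair_eq he with ⟨e1,e2⟩|⟨e1,e2⟩
      · have : t = p' := by omega
        subst this; exact hm'.2.2.1
      · exfalso; omega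
    · have h1' := hm'.1
      rcases pair_eq he with ⟨e1,e2⟩|⟨e1,e2⟩ <;> omega
    · rcases pair_eq he with ⟨e1,e2⟩|⟨e1,e2⟩ <;> omega
  · have hmem : ({(-((t : ℤ) + 1)), ((t : ℤ) + 1)} : Finset ℤ) ∈ Phi n w' :=
      hP ▸ cent_mem_Phi hc
    rcases mem_Phi_cases hmem with ⟨p',q',hm',he⟩|⟨p',q',hm',he⟩|⟨p',hm',he⟩
    · have h1' := hm'.1
      rcases pair_eq he with ⟨e1,e2⟩|⟨e1,e2⟩ <;> omega
    · have h1' := hm'.1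
      rcases pair_eq he with ⟨e1,e2⟩|⟨e1,e2⟩ <;> omega
    · rcases pair_eq he with ⟨e1,e2⟩|⟨e1,e2⟩
      · have : t = p' := by omega
        subst this; exact hm'.2.1
      · omega

lemma Phi_injOn {w' : Fin n → Bool} (hg : good n w) (hg' : good n w')
    (hP : Phi n w = Phi n w') : w = w' := by
  funext t
  have htn : (t : ℕ) < n := t.2
  have hee : ee n w t = ee n w' t := by
    rcases ee_cases (w := w) t htn with h|h
    · rw [h, ee_one_of_Phi_eq hg hP h]
    · rcases ee_cases (w := w') t htn with h'|h'
      · have := ee_one_of_Phi_eq hg' hP.symm h'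
        omega
      · omega
  unfold ee at hee
  rw [dif_pos htn, dif_pos htn] at hee
  have : (⟨(t : ℕ), htn⟩ : Fin n) = t := by ext; rfl
  rw [this] at hee
  by_cases h1 : w t <;> by_cases h2 : w' t <;> simp [h1, h2] at hee ⊢

end PhiInj

section Partner
open Classical in
noncomputable def pM (M : Finset (Finset ℤ)) (x : ℤ) : ℤ :=
  if h : ∃ y, y ≠ x ∧ ({x, y} : Finset ℤ) ∈ M then h.choose else 0

variable {n : ℕ} {M : Finset (Finset ℤ)}

lemma block_eq_pair (hM : IsNCSP n M) {b : Finset ℤ} (hb : b ∈ M) {x : ℤ} (hxb : x ∈ b) :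
    ∃ y, y ≠ x ∧ b = {x, y} := by
  obtain ⟨u, v, huv, hbe⟩ := Finset.card_eq_two.mp ((hM.1 b hb).1)
  subst hbe
  rcases mem_pair.mp hxb with rfl|rfl
  · exact ⟨v, fun h => huv h.symm, rfl⟩
  · exact ⟨u, fun h => huv h, Finset.pair_comm u x⟩

lemma pM_unique (hM : IsNCSP n M) {x y : ℤ} (hy : y ≠ x) (hb : ({x,y} : Finset ℤ) ∈ M) :
    pM M x = y := by
  have hex : ∃ y, y ≠ x ∧ ({x, y} : Finset ℤ) ∈ M := ⟨y, hy, hb⟩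
  rw [pM, dif_pos hex]
  obtain ⟨h1, h2⟩ := hex.choose_spec
  set y' := hex.choose
  -- the blocks {x,y} and {x,y'} intersect in x, hence are equal
  by_contra hne
  have hbne : ({x,y} : Finset ℤ) ≠ {x,y'} := by
    intro he
    rcases pair_eq he with ⟨e1,e2⟩|⟨e1,e2⟩ <;> omega
  have := hM.2.1 _ hb _ h2 hbne
  rw [Finset.disjoint_left] at this
  exact this (mem_pair.mpr (Or.inl rfl)) (mem_pair.mpr (Or.inl rfl))

lemma pM_spec (hM : IsNCSP n M) {x : ℤ} (hx : x ∈ pmSet n) :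
    pM M x ≠ x ∧ ({x, pM M x} : Finset ℤ) ∈ M := by
  obtain ⟨b, hb, hxb⟩ := hM.2.2.1 x hx
  obtain ⟨y, hy, rfl⟩ := block_eq_pair hM hb hxb
  rw [pM_unique hM hy hb]
  exact ⟨hy, hb⟩

lemma pM_mem (hM : IsNCSP n M) {x : ℤ} (hx : x ∈ pmSet n) : pM M x ∈ pmSet n := by
  obtain ⟨h1, h2⟩ := pM_spec hM hx
  exact (hM.1 _ h2).2 (by rw [Finset.coe_insert, Finset.coe_singleton]
                          exact Set.mem_insert_iff.mpr (Or.inr rfl))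

lemma pM_invol (hM : IsNCSP n M) {x : ℤ} (hx : x ∈ pmSet n) : pM M (pM M x) = x := by
  obtain ⟨h1, h2⟩ := pM_spec hM hx
  exact pM_unique hM (fun h => h1 h.symm) (by rw [Finset.pair_comm]; exact h2)

lemma pM_neg (hM : IsNCSP n M) {x : ℤ} (hx : x ∈ pmSet n) : pM M (-x) = -(pM M x) := by
  obtain ⟨h1, h2⟩ := pM_spec hM hx
  have := hM.2.2.2.1 _ h2
  rw [Finset.image_insert, Finset.image_singleton] at this
  exact pM_unique hM (by omega) this

lemma pM_inj (hM : IsNCSP n M) {x y : ℤ} (hx : x ∈ pmSet n) (hy : y ∈ pmSet n)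
    (h : pM M x = pM M y) : x = y := by
  have := pM_invol hM hx
  rw [h, pM_invol hM hy] at this
  omega

/-- a block with elements of both signs is centered -/
lemma mixed_centered (hM : IsNCSP n M) {x : ℤ} (hx : x ∈ pmSet n) (hx0 : 0 < x)
    (hneg : pM M x < 0) : pM M x = -x := by
  obtain ⟨h1, h2⟩ := pM_spec hM hx
  by_contra hne
  set a := pM M x with ha
  have hsym := hM.2.2.2.1 _ h2
  rw [Finset.image_insert, Finset.image_singleton] at hsym
  -- blocks {x, a} and {-x, -a} with a < 0, a ≠ -x
  set c := -a with hc
  have hc0 : 0 < c := by omega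
  have hcx : c ≠ x := by omega
  rcases lt_or_gt_of_ne hcx with hlt|hgt
  · -- c < x : crossing (-x, -c, c, x) with blocks {-x, c}, {-c, x}
    refine hM.2.2.2.2 (-x) (-c) c x ?_ ?_ (by omega) (by omega) (by omega)
    · rw [show c = -a by rfl]; exact hsym
    · rw [show (-c : ℤ) = a by omega, Finset.pair_comm]; exact h2
  · -- x < c : crossing (-c, -x, x, c) with blocks {-c, x}, {-x, c}
    refine hM.2.2.2.2 (-c) (-x) x c ?_ ?_ (by omega) (by omega) (by omega)
    · rw [show (-c : ℤ) = a by omega, Finset.pair_comm]; exact h2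
    · rw [show c = -a by rfl]; exact hsym

/-- partner of an interior point of a positive block stays strictly inside -/
lemma no_cover (hM : IsNCSP n M) {a b v : ℤ} (hab : ({a,b} : Finset ℤ) ∈ M)
    (ha : 0 < a) (h1 : a < v) (h2 : v < b) (hv : v ∈ pmSet n) :
    a < pM M v ∧ pM M v < b ∧ pM M v ≠ -v := by
  obtain ⟨hp1, hp2⟩ := pM_spec hM hv
  have hvnotblock : v ∉ ({a,b} : Finset ℤ) := by
    rw [mem_pair]; omega
  have hblockne : ({v, pM M v} : Finset ℤ) ≠ {a, b} := by
    intro he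
    exact hvnotblock (he ▸ mem_pair.mpr (Or.inl rfl))
  have hdisj := hM.2.1 _ hp2 _ hab hblockne
  rw [Finset.disjoint_left] at hdisj
  have hpa : pM M v ≠ a := fun h =>
    hdisj (mem_pair.mpr (Or.inr rfl)) (mem_pair.mpr (Or.inl h))
  have hpb : pM M v ≠ b := fun h =>
    hdisj (mem_pair.mpr (Or.inr rfl)) (mem_pair.mpr (Or.inr h))
  have hnotneg : pM M v ≠ -v := by
    intro he
    refine hM.2.2.2.2 (-v) a v b ?_ hab (by omega) h1 h2
    rw [Finset.pair_comm]
    rw [he] at hp2; exact hp2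
  have hpos : 0 < pM M v := by
    rcases lt_trichotomy (pM M v) 0 with h|h|h
    · exfalso; exact hnotneg (mixed_centered hM hv (by omega) h)
    · exfalso; exact (pM_mem hM hv).1 h
    · exact h
  refine ⟨?_, ?_, hnotneg⟩
  · by_contra hle
    push_neg at hle
    refine hM.2.2.2.2 (pM M v) a v b ?_ hab (by omega) h1 h2
    rw [Finset.pair_comm]; exact hp2
  · by_contra hle
    push_neg at hle
    refine hM.2.2.2.2 a v b (pM M v) hab hp2 h1 h2 (by omega)

/-- partner of a point outside a centered block stays outside -/
lemma no_cover_cent (hM : IsNCSP n M) {c v : ℤ} (hc : ({-c, c} : Finset ℤ) ∈ M)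
    (hc0 : 0 < c) (h1 : c < v) (hv : v ∈ pmSet n) (hdown : 0 < pM M v) (hlt : pM M v < v) :
    c < pM M v := by
  have hpc : pM M c = -c := by
    refine pM_unique hM (by omega) ?_
    rw [Finset.pair_comm]; exact hc
  obtain ⟨hp1, hp2⟩ := pM_spec hM hv
  have hcpm : pM M v ≠ c := by
    intro he
    have hcpm' : pM M (pM M v) = v := pM_invol hM hv
    rw [he, hpc] at hcpm'
    omega
  by_contra hle
  push_neg at hle
  refine hM.2.2.2.2 (-c) (pM M v) c v hc ?_ (by omega) (by omega) h1
  rw [Finset.pair_comm]; exact hp2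

end Partner

section WM


open Classical in
noncomputable def wM (n : ℕ) (M : Finset (Finset ℤ)) : Fin n → Bool := fun t =>
  if pM M ((t.val : ℤ)+1) = -((t.val : ℤ)+1) ∨ (t.val : ℤ)+1 < pM M ((t.val : ℤ)+1)
  then true else false

variable {n : ℕ} {M : Finset (Finset ℤ)}

lemma mem_pmSet_of_pos {v : ℤ} (h0 : 0 < v) (hn : v ≤ n) : v ∈ pmSet n :=
  ⟨by omega, by rw [abs_of_pos h0]; omega⟩

lemma ee_wM_one {s : ℕ} (hs : s < n)
    (h : pM M ((s : ℤ)+1) = -((s : ℤ)+1) ∨ (s : ℤ)+1 < pM M ((s : ℤ)+1)) :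
    ee n (wM n M) s = 1 := by
  have hw : wM n M ⟨s, hs⟩ = true := if_pos h
  unfold ee
  rw [dif_pos hs, hw]
  simp

lemma ee_wM_negone {s : ℕ} (hs : s < n)
    (h : ¬(pM M ((s : ℤ)+1) = -((s : ℤ)+1) ∨ (s : ℤ)+1 < pM M ((s : ℤ)+1))) :
    ee n (wM n M) s = -1 := by
  have hw : wM n M ⟨s, hs⟩ = false := if_neg h
  unfold ee
  rw [dif_pos hs, hw]
  simp

lemma ee_wM_inv {s : ℕ} (hs : s < n) (h : ee n (wM n M) s = 1) :
    pM M ((s : ℤ)+1) = -((s : ℤ)+1) ∨ (s : ℤ)+1 < pM M ((s : ℤ)+1) := by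
  by_contra hc
  rw [ee_wM_negone hs hc] at h
  omega

lemma ee_wM_inv' {s : ℕ} (hs : s < n) (h : ee n (wM n M) s = -1) :
    ¬(pM M ((s : ℤ)+1) = -((s : ℤ)+1) ∨ (s : ℤ)+1 < pM M ((s : ℤ)+1)) := by
  by_contra hc
  rw [ee_wM_one hs hc] at h
  omega

/-- position of the partner -/
noncomputable def posOf (M : Finset (Finset ℤ)) (s : ℕ) : ℕ :=
  (pM M ((s : ℤ)+1)).toNat - 1

lemma down_struct (hM : IsNCSP n M) {s : ℕ} (hs : s < n) (hd : ee n (wM n M) s = -1) :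
    posOf M s < s ∧ ((posOf M s : ℤ) = pM M ((s : ℤ)+1) - 1) ∧
      ee n (wM n M) (posOf M s) = 1 ∧ pM M ((posOf M s : ℤ)+1) = (s : ℤ)+1 := by
  have hv : ((s:ℤ)+1) ∈ pmSet n := mem_pmSet_of_pos (by omega) (by omega)
  have h := ee_wM_inv' hs hd
  push_neg at h
  obtain ⟨h1, h2⟩ := h
  have hne := (pM_spec hM hv).1
  have hp0 : 0 < pM M ((s:ℤ)+1) := by
    rcases lt_trichotomy (pM M ((s:ℤ)+1)) 0 with hc|hc|hc
    · exact absurd (mixed_centered hM hv (by omega) hc) h1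
    · exact absurd hc (pM_mem hM hv).1
    · exact hc
  have hcast : ((posOf M s : ℕ) : ℤ) = pM M ((s:ℤ)+1) - 1 := by
    unfold posOf; omega
  have hlt : posOf M s < s := by omega
  have hpart : pM M ((posOf M s : ℤ)+1) = (s : ℤ)+1 := by
    rw [show ((posOf M s : ℤ)+1) = pM M ((s:ℤ)+1) by omega]
    exact pM_invol hM hv
  refine ⟨hlt, hcast, ?_, hpart⟩
  exact ee_wM_one (by omega) (by rw [hpart]; right; omega)

lemma posOf_injOn (hM : IsNCSP n M) {s s' : ℕ} (hs : s < n) (hs' : s' < n)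
    (hd : ee n (wM n M) s = -1) (hd' : ee n (wM n M) s' = -1)
    (h : posOf M s = posOf M s') : s = s' := by
  obtain ⟨_, _, _, h4⟩ := down_struct hM hs hd
  obtain ⟨_, _, _, h4'⟩ := down_struct hM hs' hd'
  rw [h] at h4
  omega

/-- counting: sum of `ee` over a finset below `n` -/
lemma sum_ee_eq (w : Fin n → Bool) (F : Finset ℕ) (hF : ∀ s ∈ F, s < n) :
    ∑ s ∈ F, ee n w s =
      ((F.filter (fun s => ee n w s = 1)).card : ℤ) -
      ((F.filter (fun s => ee n w s = -1)).card : ℤ) := by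
  classical
  induction F using Finset.induction with
  | empty => simp
  | @insert a F' hx ih =>
    rw [Finset.sum_insert hx]
    rw [ih (fun s hs => hF s (Finset.mem_insert_of_mem hs))]
    rcases ee_cases (w := w) a (hF a (Finset.mem_insert_self a F')) with h|h
    · rw [Finset.filter_insert, Finset.filter_insert, if_pos h, if_neg (by omega),
        Finset.card_insert_of_notMem (by simp [hx])]
      push_cast
      omega
    · rw [Finset.filter_insert, Finset.filter_insert, if_neg (by omega), if_pos h,
        Finset.card_insert_of_notMem (by simp [hx])]
      push_cast
      omega

lemma SS_diff (w : Fin n → Bool) {a b : ℕ} (hab : a ≤ b) :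
    SS n w b - SS n w a = ∑ s ∈ Finset.Ico a b, ee n w s := by
  unfold SS
  rw [Finset.sum_Ico_eq_sub _ hab]

/-- if the partner of every down-step inside a window stays inside, the window sum is ≥ 0 -/
lemma sum_window_nonneg (hM : IsNCSP n M) {lo hi : ℕ} (hhi : hi ≤ n)
    (H : ∀ s, s ∈ Finset.Ico lo hi → ee n (wM n M) s = -1 → lo ≤ posOf M s) :
    0 ≤ ∑ s ∈ Finset.Ico lo hi, ee n (wM n M) s := by
  classical
  rw [sum_ee_eq (wM n M) _ (fun s hs => by have := Finset.mem_Ico.mp hs; omega)]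
  have hinj : Set.InjOn (posOf M)
      ((Finset.Ico lo hi).filter (fun s => ee n (wM n M) s = -1)) := by
    intro s hs s' hs' h
    simp only [Finset.coe_filter, Set.mem_setOf_eq, Finset.mem_Ico] at hs hs'
    exact posOf_injOn hM (by omega) (by omega) hs.2 hs'.2 h
  have hmaps : ∀ s ∈ (Finset.Ico lo hi).filter (fun s => ee n (wM n M) s = -1),
      posOf M s ∈ (Finset.Ico lo hi).filter (fun s => ee n (wM n M) s = 1) := by
    intro s hs
    rw [Finset.mem_filter, Finset.mem_Ico] at hs
    obtain ⟨⟨hs1, hs2⟩, hs3⟩ := hs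
    obtain ⟨hh1, hh2, hh3, hh4⟩ := down_struct hM (by omega) hs3
    rw [Finset.mem_filter, Finset.mem_Ico]
    exact ⟨⟨H s (Finset.mem_Ico.mpr ⟨hs1, hs2⟩) hs3, by omega⟩, hh3⟩
  have := Finset.card_le_card_of_injOn (posOf M) hmaps hinj
  omega

/-- if additionally every up-step inside the window has its partner inside, the sum is 0 -/
lemma sum_window_zero (hM : IsNCSP n M) {lo hi : ℕ} (hhi : hi ≤ n)
    (H : ∀ s, s ∈ Finset.Ico lo hi → ee n (wM n M) s = -1 → lo ≤ posOf M s)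
    (H' : ∀ s, s ∈ Finset.Ico lo hi → ee n (wM n M) s = 1 →
      ∃ q, q ∈ Finset.Ico lo hi ∧ ee n (wM n M) q = -1 ∧ posOf M q = s) :
    ∑ s ∈ Finset.Ico lo hi, ee n (wM n M) s = 0 := by
  classical
  rw [sum_ee_eq (wM n M) _ (fun s hs => by have := Finset.mem_Ico.mp hs; omega)]
  have hinj : Set.InjOn (posOf M)
      ((Finset.Ico lo hi).filter (fun s => ee n (wM n M) s = -1)) := by
    intro s hs s' hs' h
    simp only [Finset.coe_filter, Set.mem_setOf_eq, Finset.mem_Ico] at hs hs'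
    exact posOf_injOn hM (by omega) (by omega) hs.2 hs'.2 h
  have hmaps : ∀ s ∈ (Finset.Ico lo hi).filter (fun s => ee n (wM n M) s = -1),
      posOf M s ∈ (Finset.Ico lo hi).filter (fun s => ee n (wM n M) s = 1) := by
    intro s hs
    rw [Finset.mem_filter, Finset.mem_Ico] at hs
    obtain ⟨⟨hs1, hs2⟩, hs3⟩ := hs
    obtain ⟨hh1, hh2, hh3, hh4⟩ := down_struct hM (by omega) hs3
    rw [Finset.mem_filter, Finset.mem_Ico]
    exact ⟨⟨H s (Finset.mem_Ico.mpr ⟨hs1, hs2⟩) hs3, by omega⟩, hh3⟩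
  have h1 := Finset.card_le_card_of_injOn (posOf M) hmaps hinj
  have hsurj : ∀ u ∈ (Finset.Ico lo hi).filter (fun s => ee n (wM n M) s = 1),
      ∃ d ∈ (Finset.Ico lo hi).filter (fun s => ee n (wM n M) s = -1), posOf M d = u := by
    intro u hu
    rw [Finset.mem_filter] at hu
    obtain ⟨q, hq1, hq2, hq3⟩ := H' u hu.1 hu.2
    exact ⟨q, Finset.mem_filter.mpr ⟨hq1, hq2⟩, hq3⟩
  have h2 : ((Finset.Ico lo hi).filter (fun s => ee n (wM n M) s = 1)).card ≤
      ((Finset.Ico lo hi).filter (fun s => ee n (wM n M) s = -1)).card := by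
    apply Finset.card_le_card_of_surjOn (posOf M)
    intro u hu
    have hu' : u ∈ (Finset.Ico lo hi).filter (fun s => ee n (wM n M) s = 1) := hu
    obtain ⟨d, hd, hdu⟩ := hsurj u hu'
    exact ⟨d, hd, hdu⟩
  omega

end WM

section Surj


variable {n : ℕ} {M : Finset (Finset ℤ)}

lemma block_le (hM : IsNCSP n M) {b : Finset ℤ} (hb : b ∈ M) {x : ℤ} (hx : x ∈ b) :
    x ≠ 0 ∧ |x| ≤ (n : ℤ) := (hM.1 b hb).2 hx

lemma block_matched (hM : IsNCSP n M) {a b : ℤ} (hab : ({a,b} : Finset ℤ) ∈ M)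
    (ha : 0 < a) (hb : a < b) :
    matched n (wM n M) ((a-1).toNat) ((b-1).toNat) := by
  have hbn : b ≤ (n : ℤ) := by
    have := block_le hM hab (mem_pair.mpr (Or.inr rfl))
    have h2 : |b| = b := abs_of_pos (by omega)
    omega
  set p := (a-1).toNat with hpdef
  set q := (b-1).toNat with hqdef
  have hpa : (p : ℤ) = a - 1 := by omega
  have hqb : (q : ℤ) = b - 1 := by omega
  have hpq : p < q := by omega
  have hqn : q < n := by omega
  have hpMa : pM M a = b := pM_unique hM (by omega) hab
  have hpMb : pM M b = a := pM_unique hM (by omega) (by rw [Finset.pair_comm]; exact hab)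
  have heep : ee n (wM n M) p = 1 := by
    apply ee_wM_one (by omega)
    rw [show ((p:ℤ)+1) = a by omega, hpMa]
    right; omega
  have heeq : ee n (wM n M) q = -1 := by
    apply ee_wM_negone (by omega)
    rw [show ((q:ℤ)+1) = b by omega, hpMb]
    push_neg
    constructor <;> omega
  have Hdown : ∀ s, s ∈ Finset.Ico (p+1) q → ee n (wM n M) s = -1 → p+1 ≤ posOf M s := by
    intro s hs hd
    rw [Finset.mem_Ico] at hs
    obtain ⟨hd1, hd2, hd3, hd4⟩ := down_struct hM (by omega) hd
    have hv : ((s:ℤ)+1) ∈ pmSet n := mem_pmSet_of_pos (by omega) (by omega)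
    have hnc := no_cover hM hab ha (by omega) (by omega) hv
    omega
  have Hup : ∀ s, s ∈ Finset.Ico (p+1) q → ee n (wM n M) s = 1 →
      ∃ d, d ∈ Finset.Ico (p+1) q ∧ ee n (wM n M) d = -1 ∧ posOf M d = s := by
    intro s hs hu
    rw [Finset.mem_Ico] at hs
    have hv : ((s:ℤ)+1) ∈ pmSet n := mem_pmSet_of_pos (by omega) (by omega)
    have hnc := no_cover hM hab ha (by omega) (by omega) hv
    have hcases := ee_wM_inv (by omega : s < n) hu
    have hgt : (s:ℤ)+1 < pM M ((s:ℤ)+1) := by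
      rcases hcases with h|h
      · exfalso; exact hnc.2.2 h
      · exact h
    set d := (pM M ((s:ℤ)+1) - 1).toNat with hddef
    have hdz : (d : ℤ) = pM M ((s:ℤ)+1) - 1 := by omega
    have hinv : pM M (pM M ((s:ℤ)+1)) = (s:ℤ)+1 := pM_invol hM hv
    have hpMd : pM M ((d:ℤ)+1) = (s:ℤ)+1 := by
      rw [show ((d:ℤ)+1) = pM M ((s:ℤ)+1) by omega]
      exact hinv
    have heed : ee n (wM n M) d = -1 := by
      apply ee_wM_negone (by omega)
      rw [hpMd]
      push_neg
      constructor <;> omega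
    refine ⟨d, Finset.mem_Ico.mpr ⟨by omega, by omega⟩, heed, ?_⟩
    unfold posOf
    rw [hpMd]
    omega
  have hsum0 : ∑ s ∈ Finset.Ico (p+1) q, ee n (wM n M) s = 0 :=
    sum_window_zero hM (by omega) Hdown Hup
  have hmid : ∀ t, p < t → t ≤ q → SS n (wM n M) p < SS n (wM n M) t := by
    intro t ht1 ht2
    have h1 : SS n (wM n M) t - SS n (wM n M) p = ∑ s ∈ Finset.Ico p t, ee n (wM n M) s :=
      SS_diff _ (by omega)
    have h2 : ∑ s ∈ Finset.Ico p t, ee n (wM n M) s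
        = ee n (wM n M) p + ∑ s ∈ Finset.Ico (p+1) t, ee n (wM n M) s :=
      Finset.sum_eq_sum_Ico_succ_bot (by omega) _
    have h3 : 0 ≤ ∑ s ∈ Finset.Ico (p+1) t, ee n (wM n M) s := by
      apply sum_window_nonneg hM (by omega)
      intro s hs hd
      rw [Finset.mem_Ico] at hs
      exact Hdown s (Finset.mem_Ico.mpr ⟨hs.1, by omega⟩) hd
    omega
  have hSSq : SS n (wM n M) (q+1) = SS n (wM n M) p := by
    have h1 : SS n (wM n M) (q+1) - SS n (wM n M) p
        = ∑ s ∈ Finset.Ico p (q+1), ee n (wM n M) s := SS_diff _ (by omega)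
    have h2 : ∑ s ∈ Finset.Ico p (q+1), ee n (wM n M) s
        = ∑ s ∈ Finset.Ico p q, ee n (wM n M) s + ee n (wM n M) q :=
      Finset.sum_Ico_succ_top (by omega) _
    have h3 : ∑ s ∈ Finset.Ico p q, ee n (wM n M) s
        = ee n (wM n M) p + ∑ s ∈ Finset.Ico (p+1) q, ee n (wM n M) s :=
      Finset.sum_eq_sum_Ico_succ_bot (by omega) _
    omega
  exact ⟨hpq, hqn, heep, heeq, hSSq, hmid⟩

lemma cent_blocked (hM : IsNCSP n M) {c : ℤ} (hcM : ({-c, c} : Finset ℤ) ∈ M) (hc0 : 0 < c) :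
    centered n (wM n M) ((c-1).toNat) := by
  have hcn : c ≤ (n : ℤ) := by
    have := block_le hM hcM (mem_pair.mpr (Or.inr rfl))
    have h2 : |c| = c := abs_of_pos hc0
    omega
  set g := (c-1).toNat with hgdef
  have hgc : (g : ℤ) = c - 1 := by omega
  have hgn : g < n := by omega
  have hpMc : pM M c = -c := pM_unique hM (by omega) (by rw [Finset.pair_comm]; exact hcM)
  have heeg : ee n (wM n M) g = 1 := by
    apply ee_wM_one (by omega)
    rw [show ((g:ℤ)+1) = c by omega, hpMc]
    left; rfl
  refine ⟨hgn, heeg, ?_⟩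
  intro t ht1 ht2
  have Hdown : ∀ s, s ∈ Finset.Ico (g+1) t → ee n (wM n M) s = -1 → g+1 ≤ posOf M s := by
    intro s hs hd
    rw [Finset.mem_Ico] at hs
    obtain ⟨hd1, hd2, hd3, hd4⟩ := down_struct hM (by omega) hd
    have hv : ((s:ℤ)+1) ∈ pmSet n := mem_pmSet_of_pos (by omega) (by omega)
    have hnc := no_cover_cent hM hcM hc0 (by omega) hv (by omega) (by omega)
    omega
  have h1 : SS n (wM n M) t - SS n (wM n M) g = ∑ s ∈ Finset.Ico g t, ee n (wM n M) s :=
    SS_diff _ (by omega)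
  have h2 : ∑ s ∈ Finset.Ico g t, ee n (wM n M) s
      = ee n (wM n M) g + ∑ s ∈ Finset.Ico (g+1) t, ee n (wM n M) s :=
    Finset.sum_eq_sum_Ico_succ_bot (by omega) _
  have h3 : 0 ≤ ∑ s ∈ Finset.Ico (g+1) t, ee n (wM n M) s :=
    sum_window_nonneg hM (by omega) Hdown
  omega

lemma wM_good (hM : IsNCSP n M) : good n (wM n M) := by
  intro t
  rcases le_or_gt t n with h|h
  · have h1 : SS n (wM n M) t - SS n (wM n M) 0 = ∑ s ∈ Finset.Ico 0 t, ee n (wM n M) s :=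
      SS_diff _ (by omega)
    have h2 : 0 ≤ ∑ s ∈ Finset.Ico 0 t, ee n (wM n M) s :=
      sum_window_nonneg hM h (fun s _ _ => Nat.zero_le _)
    have h3 : SS n (wM n M) 0 = 0 := SS_zero
    omega
  · rw [SS_stable (by omega : n ≤ t)]
    have h1 : SS n (wM n M) n - SS n (wM n M) 0 = ∑ s ∈ Finset.Ico 0 n, ee n (wM n M) s :=
      SS_diff _ (by omega)
    have h2 : 0 ≤ ∑ s ∈ Finset.Ico 0 n, ee n (wM n M) s :=
      sum_window_nonneg hM (le_refl _) (fun s _ _ => Nat.zero_le _)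
    have h3 : SS n (wM n M) 0 = 0 := SS_zero
    omega

/-- a sequence-level matched pair gives a block of `M` -/
lemma matched_block (hM : IsNCSP n M) {p q : ℕ} (hm : matched n (wM n M) p q) :
    ({((p:ℤ)+1), ((q:ℤ)+1)} : Finset ℤ) ∈ M := by
  have hpn : p < n := by have := hm.1; have := hm.2.1; omega
  have hv : ((p:ℤ)+1) ∈ pmSet n := mem_pmSet_of_pos (by omega) (by omega)
  rcases ee_wM_inv hpn hm.2.2.1 with hc|hc
  · exfalso
    -- centered block, contradicting matched
    have hblock := (pM_spec hM hv).2
    rw [hc] at hblock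
    have hcM : ({-((p:ℤ)+1), ((p:ℤ)+1)} : Finset ℤ) ∈ M := by
      rw [Finset.pair_comm] at hblock; exact hblock
    have hcent := cent_blocked hM hcM (by omega)
    have : (((p:ℤ)+1) - 1).toNat = p := by omega
    rw [this] at hcent
    exact matched_not_centered_left hm hcent
  · have hblock := (pM_spec hM hv).2
    have hm2 := block_matched hM hblock (by omega) hc
    have hp' : (((p:ℤ)+1) - 1).toNat = p := by omega
    rw [hp'] at hm2
    have hq' := matched_right_unique hm hm2
    have hq'' : ((q:ℤ)+1) = pM M ((p:ℤ)+1) := by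
      have hpos : 0 < pM M ((p:ℤ)+1) := by omega
      omega
    rw [hq'']
    exact hblock

/-- a sequence-level centered point gives a centered block of `M` -/
lemma centered_block (hM : IsNCSP n M) {p : ℕ} (hm : centered n (wM n M) p) :
    ({-((p:ℤ)+1), ((p:ℤ)+1)} : Finset ℤ) ∈ M := by
  have hpn : p < n := hm.1
  have hv : ((p:ℤ)+1) ∈ pmSet n := mem_pmSet_of_pos (by omega) (by omega)
  rcases ee_wM_inv hpn hm.2.1 with hc|hc
  · have hblock := (pM_spec hM hv).2
    rw [hc, Finset.pair_comm] at hblock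
    exact hblock
  · exfalso
    have hblock := (pM_spec hM hv).2
    have hm2 := block_matched hM hblock (by omega) hc
    have hp' : (((p:ℤ)+1) - 1).toNat = p := by omega
    rw [hp'] at hm2
    exact matched_not_centered_left hm2 hm

theorem Phi_wM_eq (hM : IsNCSP n M) : Phi n (wM n M) = M := by
  apply Finset.Subset.antisymm
  · intro B hB
    rcases mem_Phi_cases hB with ⟨p,q,hm,rfl⟩|⟨p,q,hm,rfl⟩|⟨p,hm,rfl⟩
    · exact matched_block hM hm
    · have h1 := matched_block hM hm
      have h2 := hM.2.2.2.1 _ h1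
      rw [Finset.image_insert, Finset.image_singleton] at h2
      rw [Finset.pair_comm] at h2
      exact h2
    · exact centered_block hM hm
  · intro b hb
    obtain ⟨u, v, huv, rfl⟩ := Finset.card_eq_two.mp ((hM.1 b hb).1)
    have hu := block_le hM hb (mem_pair.mpr (Or.inl rfl))
    have hv := block_le hM hb (mem_pair.mpr (Or.inr rfl))
    -- wlog through sign cases
    rcases lt_trichotomy u 0 with hu0|hu0|hu0 <;> rcases lt_trichotomy v 0 with hv0|hv0|hv0
    · -- both negative
      have hsym := hM.2.2.2.1 _ hb
      rw [Finset.image_insert, Finset.image_singleton] at hsym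
      rcases lt_or_gt_of_ne huv with hlt|hgt
      · -- u < v < 0, so 0 < -v < -u ; block {-v, -u}
        rw [Finset.pair_comm] at hsym
        have hm := block_matched hM hsym (by omega) (by omega)
        have h2 := neg_pair_mem_Phi hm
        have e1 : ((((-v) - 1).toNat : ℤ)) = -v - 1 := by omega
        have e2 : ((((-u) - 1).toNat : ℤ)) = -u - 1 := by omega
        have : ({-((((-u) - 1).toNat : ℤ)+1), -((((-v) - 1).toNat : ℤ)+1)} : Finset ℤ)
            = {u, v} := by
          rw [show -((((-u) - 1).toNat : ℤ)+1) = u by omega,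
              show -((((-v) - 1).toNat : ℤ)+1) = v by omega]
        rw [← this]
        exact h2
      · -- v < u < 0
        have hm := block_matched hM hsym (by omega) (by omega)
        have h2 := neg_pair_mem_Phi hm
        have : ({-((((-v) - 1).toNat : ℤ)+1), -((((-u) - 1).toNat : ℤ)+1)} : Finset ℤ)
            = {u, v} := by
          rw [show -((((-v) - 1).toNat : ℤ)+1) = v by omega,
              show -((((-u) - 1).toNat : ℤ)+1) = u by omega, Finset.pair_comm]
        rw [← this]
        exact h2
    · exact absurd hv0 hv.1
    · -- u < 0 < v : must be centered
      have hpv : pM M v = u := by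
        rw [Finset.pair_comm] at hb
        exact pM_unique hM (by omega) hb
      have hvp : v ∈ pmSet n := mem_pmSet_of_pos hv0 (by
        have : |v| = v := abs_of_pos hv0
        omega)
      have : u = -v := by
        have := mixed_centered hM hvp hv0 (by omega)
        omega
      subst this
      have hcent := cent_blocked hM hb hv0
      have h2 := cent_mem_Phi hcent
      have : ({-(((v - 1).toNat : ℤ)+1), (((v - 1).toNat : ℤ)+1)} : Finset ℤ) = {-v, v} := by
        rw [show (((v - 1).toNat : ℤ)+1) = v by omega]
      rw [this] at h2
      exact h2
    · exact absurd hu0 hu.1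
    · exact absurd hu0 hu.1
    · exact absurd hu0 hu.1
    · -- v < 0 < u : centered
      have hpu : pM M u = v := pM_unique hM (by omega) hb
      have hup : u ∈ pmSet n := mem_pmSet_of_pos hu0 (by
        have : |u| = u := abs_of_pos hu0
        omega)
      have : v = -u := by
        have := mixed_centered hM hup hu0 (by omega)
        omega
      subst this
      rw [Finset.pair_comm] at hb ⊢
      have hcent := cent_blocked hM hb hu0
      have h2 := cent_mem_Phi hcent
      have : ({-(((u - 1).toNat : ℤ)+1), (((u - 1).toNat : ℤ)+1)} : Finset ℤ) = {-u, u} := by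
        rw [show (((u - 1).toNat : ℤ)+1) = u by omega]
      rw [this] at h2
      exact h2
    · exact absurd hv0 hv.1
    · -- both positive
      rcases lt_or_gt_of_ne huv with hlt|hgt
      · have hm := block_matched hM hb hu0 hlt
        have h2 := pos_pair_mem_Phi hm
        have : ({(((u - 1).toNat : ℤ)+1), (((v - 1).toNat : ℤ)+1)} : Finset ℤ) = {u, v} := by
          rw [show (((u - 1).toNat : ℤ)+1) = u by omega,
              show (((v - 1).toNat : ℤ)+1) = v by omega]
        rw [← this]
        exact h2
      · rw [Finset.pair_comm] at hb ⊢
        have hm := block_matched hM hb hv0 hgt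
        have h2 := pos_pair_mem_Phi hm
        have : ({(((v - 1).toNat : ℤ)+1), (((u - 1).toNat : ℤ)+1)} : Finset ℤ) = {v, u} := by
          rw [show (((v - 1).toNat : ℤ)+1) = v by omega,
              show (((u - 1).toNat : ℤ)+1) = u by omega]
        rw [← this]
        exact h2

theorem Phi_surj (hM : IsNCSP n M) : ∃ w : Fin n → Bool, good n w ∧ Phi n w = M :=
  ⟨wM n M, wM_good hM, Phi_wM_eq hM⟩

end Surj

section Count
/-- ballot numbers -/
def ff : ℕ → ℕ → ℕ
  | 0, 0 => 1
  | 0, _+1 => 0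
  | n+1, 0 => ff n 1
  | n+1, h+1 => ff n h + ff n (h+2)

open Classical in
noncomputable def A (n h : ℕ) : Finset (Fin n → Bool) :=
  Finset.univ.filter (fun w => good n w ∧ SS n w n = (h : ℤ))

lemma SS_le {n : ℕ} {w : Fin n → Bool} (t : ℕ) : SS n w t ≤ t := by
  induction t with
  | zero => rw [SS_zero]; exact le_refl _
  | succ t ih =>
    rw [SS_succ]
    have : ee n w t ≤ 1 := by
      rcases le_or_gt n t with h|h
      · rw [ee_zero h]; omega
      · rcases ee_cases (w := w) t h with h'|h' <;> omega
    push_cast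
    omega

lemma ee_castSucc {n : ℕ} (w : Fin (n+1) → Bool) {s : ℕ} (hs : s < n) :
    ee (n+1) w s = ee n (fun i => w i.castSucc) s := by
  unfold ee
  rw [dif_pos hs, dif_pos (by omega : s < n + 1)]
  rfl

lemma SS_castSucc {n : ℕ} (w : Fin (n+1) → Bool) {t : ℕ} (ht : t ≤ n) :
    SS (n+1) w t = SS n (fun i => w i.castSucc) t := by
  unfold SS
  apply Finset.sum_congr rfl
  intro s hs
  rw [Finset.mem_range] at hs
  exact ee_castSucc w (by omega)

lemma ee_last {n : ℕ} (w : Fin (n+1) → Bool) :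
    ee (n+1) w n = if w (Fin.last n) then 1 else -1 := by
  unfold ee
  rw [dif_pos (by omega : n < n + 1)]
  rfl

lemma good_succ_iff {n : ℕ} (w : Fin (n+1) → Bool) :
    good (n+1) w ↔ good n (fun i => w i.castSucc) ∧ 0 ≤ SS (n+1) w (n+1) := by
  constructor
  · intro hg
    refine ⟨?_, hg (n+1)⟩
    intro t
    rcases le_or_gt t n with h|h
    · rw [← SS_castSucc w h]; exact hg t
    · rw [SS_stable (by omega : n ≤ t), ← SS_castSucc w (le_refl n)]
      exact hg n
  · rintro ⟨hg, hlast⟩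
    intro t
    rcases le_or_gt t n with h|h
    · rw [SS_castSucc w h]; exact hg t
    · rw [SS_stable (by omega : n + 1 ≤ t)]
      exact hlast

lemma snoc_castSucc_eq {n : ℕ} (v : Fin n → Bool) (b : Bool) :
    (fun i : Fin n => (Fin.snoc v b : Fin (n+1) → Bool) i.castSucc) = v := by
  funext i
  simp [Fin.snoc_castSucc]

/-- the two branch bijections -/
lemma card_A_succ (n h : ℕ) (b : Bool) (h' : ℕ) (hcomp : (h' : ℤ) = (h : ℤ) - (if b then 1 else -1)) :
    ((A (n+1) h).filter (fun w => w (Fin.last n) = b)).card = (A n h').card := by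
  classical
  refine Finset.card_bij' (fun w _ => (fun i : Fin n => w i.castSucc))
    (fun v _ => (Fin.snoc v b : Fin (n+1) → Bool)) ?_ ?_ ?_ ?_
  · intro w hw
    rw [Finset.mem_filter] at hw
    obtain ⟨hw1, hw2⟩ := hw
    rw [A, Finset.mem_filter] at hw1
    obtain ⟨-, hg, hS⟩ := hw1
    rw [A, Finset.mem_filter]
    have hgi := (good_succ_iff w).mp hg
    refine ⟨Finset.mem_univ _, hgi.1, ?_⟩
    have h1 := SS_succ (n := n+1) (w := w) n
    have h2 := ee_last w
    rw [hw2] at h2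
    have h3 := SS_castSucc w (le_refl n)
    rw [← h3]
    cases b <;> simp only [if_true, if_false, Bool.false_eq_true] at h2 hcomp <;> omega
  · intro v hv
    rw [A, Finset.mem_filter] at hv
    obtain ⟨-, hg, hS⟩ := hv
    rw [Finset.mem_filter]
    have hinit := snoc_castSucc_eq v b
    have h1 := SS_succ (n := n+1) (w := (Fin.snoc v b : Fin (n+1) → Bool)) n
    have h2 := ee_last (Fin.snoc v b : Fin (n+1) → Bool)
    have hlast : (Fin.snoc v b : Fin (n+1) → Bool) (Fin.last n) = b := Fin.snoc_last _ _
    rw [hlast] at h2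
    have h3 := SS_castSucc (Fin.snoc v b : Fin (n+1) → Bool) (le_refl n)
    rw [hinit] at h3
    have hSn : 0 ≤ SS n v n := hg n
    have hgood : good (n+1) (Fin.snoc v b : Fin (n+1) → Bool) := by
      rw [good_succ_iff, hinit]
      refine ⟨hg, ?_⟩
      cases b <;> simp only [if_true, if_false, Bool.false_eq_true] at h2 hcomp <;> omega
    refine ⟨?_, hlast⟩
    rw [A, Finset.mem_filter]
    refine ⟨Finset.mem_univ _, hgood, ?_⟩
    cases b <;> simp only [if_true, if_false, Bool.false_eq_true] at h2 hcomp <;> omega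
  · intro w hw
    rw [Finset.mem_filter] at hw
    have h1 : (Fin.snoc (fun i : Fin n => w i.castSucc) (w (Fin.last n)) : Fin (n+1) → Bool)
        = w := by
      funext i
      exact congrFun (Fin.snoc_init_self w) i
    obtain ⟨-, h2⟩ := hw
    subst h2
    exact h1
  · intro v _
    exact snoc_castSucc_eq v b

lemma card_A_empty_neg {n h : ℕ} (hh : 0 < h) (hn : (n : ℤ) < h) : (A n h).card = 0 := by
  classical
  rw [Finset.card_eq_zero, A, Finset.filter_eq_empty_iff]
  intro w _
  rintro ⟨hg, hS⟩
  have := SS_le (n := n) (w := w) n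
  omega

lemma card_A_zero_true {n : ℕ} :
    ((A (n+1) 0).filter (fun w => w (Fin.last n) = true)).card = 0 := by
  classical
  rw [Finset.card_eq_zero, Finset.filter_eq_empty_iff]
  intro w hw
  rw [A, Finset.mem_filter] at hw
  obtain ⟨-, hg, hS⟩ := hw
  intro hlast
  have h1 := SS_succ (n := n+1) (w := w) n
  have h2 := ee_last w
  rw [hlast] at h2
  simp only [if_true] at h2
  have h3 := SS_castSucc w (le_refl n)
  have h4 := (good_succ_iff w).mp hg
  have h5 := h4.1 n
  rw [← h3] at h5
  omega

lemma card_A_eq_ff (n h : ℕ) : (A n h).card = ff n h := by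
  classical
  induction n generalizing h with
  | zero =>
    cases h with
    | zero =>
      rw [show ff 0 0 = 1 from rfl]
      rw [A]
      rw [Finset.card_eq_one]
      refine ⟨fun i => i.elim0, ?_⟩
      apply Finset.eq_singleton_iff_unique_mem.mpr
      constructor
      · rw [Finset.mem_filter]
        refine ⟨Finset.mem_univ _, fun t => ?_, ?_⟩
        · have : SS 0 (fun i => i.elim0) t = 0 := by
            unfold SS
            apply Finset.sum_eq_zero
            intro s _
            exact ee_zero (by omega)
          omega
        · have : SS 0 (fun i => i.elim0) 0 = 0 := SS_zero
          rw [this]; rfl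
      · intro w _
        funext i
        exact i.elim0
    | succ h =>
      rw [show ff 0 (h+1) = 0 from rfl]
      exact card_A_empty_neg (by omega) (by push_cast; omega)
  | succ n ih =>
    have key : (A (n+1) h).card
        = ((A (n+1) h).filter (fun w => w (Fin.last n) = true)).card
          + ((A (n+1) h).filter (fun w => w (Fin.last n) = false)).card := by
      rw [← Finset.card_filter_add_card_filter_not
        (s := A (n+1) h) (p := fun w => w (Fin.last n) = true)]
      congr 1
      apply congrArg
      apply Finset.filter_congr
      intro w _
      simp
    cases h with
    | zero =>
      rw [show ff (n+1) 0 = ff n 1 from rfl]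
      have h1 := card_A_zero_true (n := n)
      have h2 := card_A_succ n 0 false 1 (by simp)
      rw [key, h1, h2, ih 1, Nat.zero_add]
    | succ h =>
      rw [show ff (n+1) (h+1) = ff n h + ff n (h+2) from rfl]
      have h1 := card_A_succ n (h+1) true h (by simp)
      have h2 := card_A_succ n (h+1) false (h+2) (by push_cast; simp; ring)
      rw [key, h1, h2, ih h, ih (h+2)]

end Count

section Count2
lemma ff_zero : ∀ n h, (n < h ∨ (n + h) % 2 = 1) → ff n h = 0 := by
  intro n
  induction n with
  | zero =>
    intro h hh
    cases h with
    | zero => omega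
    | succ h => rfl
  | succ n ih =>
    intro h hh
    cases h with
    | zero =>
      rw [show ff (n+1) 0 = ff n 1 from rfl]
      exact ih 1 (by omega)
    | succ h =>
      rw [show ff (n+1) (h+1) = ff n h + ff n (h+2) from rfl]
      rw [ih h (by omega), ih (h+2) (by omega)]

lemma ff_formula : ∀ n h, h ≤ n → (n + h) % 2 = 0 →
    ff n h + Nat.choose n ((n+h)/2+1) = Nat.choose n ((n-h)/2) := by
  intro n
  induction n with
  | zero =>
    intro h h1 h2
    have : h = 0 := by omega
    subst this
    simp [ff]
  | succ n ih =>
    intro h h1 h2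
    cases h with
    | zero =>
      -- n odd, k := (n+1)/2 ≥ 1
      rw [show ff (n+1) 0 = ff n 1 from rfl]
      set k := (n+1)/2 with hk
      have hn1 : 1 ≤ n := by omega
      have hIH := ih 1 (by omega) (by omega)
      have e1 : (n+1)/2 + 1 = k + 1 := by omega
      have e2 : (n-1)/2 = k - 1 := by omega
      rw [e1, e2] at hIH
      have p1 : Nat.choose (n+1) (k+1) = Nat.choose n k + Nat.choose n (k+1) :=
        Nat.choose_succ_succ' n k
      have p2 : Nat.choose (n+1) k = Nat.choose n (k-1) + Nat.choose n k := by
        have := Nat.choose_succ_succ' n (k-1)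
        rw [show k-1+1 = k by omega] at this
        exact this
      rw [show ((n+1)+0)/2+1 = k+1 by omega, show ((n+1)-0)/2 = k by omega]
      omega
    | succ h =>
      rw [show ff (n+1) (h+1) = ff n h + ff n (h+2) from rfl]
      rcases Nat.lt_or_ge h n with hlt|hge
      · -- h ≤ n - 2 by parity
        have hh2 : h + 2 ≤ n := by omega
        set k := (n-h)/2 with hk
        set j := (n+h)/2 + 1 with hj
        have hk1 : 1 ≤ k := by omega
        have hIH1 := ih h (by omega) (by omega)
        have hIH2 := ih (h+2) (by omega) (by omega)
        rw [show (n+h)/2+1 = j by omega, show (n-h)/2 = k by omega] at hIH1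
        rw [show (n+(h+2))/2+1 = j+1 by omega, show (n-(h+2))/2 = k-1 by omega] at hIH2
        have p1 : Nat.choose (n+1) (j+1) = Nat.choose n j + Nat.choose n (j+1) :=
          Nat.choose_succ_succ' n j
        have p2 : Nat.choose (n+1) k = Nat.choose n (k-1) + Nat.choose n k := by
          have := Nat.choose_succ_succ' n (k-1)
          rw [show k-1+1 = k by omega] at this
          exact this
        rw [show ((n+1)+(h+1))/2+1 = j+1 by omega, show ((n+1)-(h+1))/2 = k by omega]
        omega
      · -- h = n
        have heq : h = n := by omega
        have hIH := ih h (by omega) (by omega)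
        rw [show (n+h)/2+1 = n+1 by omega, show (n-h)/2 = 0 by omega,
          Nat.choose_eq_zero_of_lt (by omega), Nat.choose_zero_right] at hIH
        have hffn2 : ff n (h+2) = 0 := ff_zero n (h+2) (by omega)
        rw [hffn2,
          show ((n+1)+(h+1))/2+1 = n+2 by omega, show ((n+1)-(h+1))/2 = 0 by omega,
          Nat.choose_eq_zero_of_lt (by omega), Nat.choose_zero_right]
        omega

lemma ff_n_n (n : ℕ) : ff n n = 1 := by
  have := ff_formula n n (le_refl n) (by omega)
  rw [show (n+n)/2+1 = n+1 by omega, show (n-n)/2 = 0 by omega,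
    Nat.choose_eq_zero_of_lt (by omega), Nat.choose_zero_right] at this
  omega

lemma ff_partial_sum (n : ℕ) : ∀ m, 2*m ≤ n →
    ∑ k ∈ Finset.range (m+1), ff n (n - 2*k) = Nat.choose n m := by
  intro m
  induction m with
  | zero =>
    intro _
    rw [Finset.sum_range_one, show n - 2*0 = n by omega, ff_n_n, Nat.choose_zero_right]
  | succ m ih =>
    intro hm
    rw [Finset.sum_range_succ, ih (by omega)]
    have hform := ff_formula n (n - 2*(m+1)) (by omega) (by omega)
    rw [show (n+(n-2*(m+1)))/2+1 = n-m by omega, show (n-(n-2*(m+1)))/2 = m+1 by omega] at hform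
    have hsymm : Nat.choose n (n - m) = Nat.choose n m := Nat.choose_symm (by omega)
    omega

lemma ff_total_sum (n : ℕ) :
    ∑ h ∈ Finset.range (n+1), ff n h = Nat.choose n (n/2) := by
  classical
  have himsub : (Finset.range (n/2+1)).image (fun k => n - 2*k) ⊆ Finset.range (n+1) := by
    intro x hx
    rw [Finset.mem_image] at hx
    obtain ⟨k, hk, rfl⟩ := hx
    rw [Finset.mem_range] at hk ⊢
    omega
  have hzero : ∀ x ∈ Finset.range (n+1),
      x ∉ (Finset.range (n/2+1)).image (fun k => n - 2*k) → ff n x = 0 := by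
    intro x hx hnx
    rw [Finset.mem_range] at hx
    by_contra hne
    apply hnx
    have hcond : ¬ (n < x ∨ (n + x) % 2 = 1) := by
      intro hc
      exact hne (ff_zero n x hc)
    push_neg at hcond
    rw [Finset.mem_image]
    exact ⟨(n-x)/2, Finset.mem_range.mpr (by omega), by omega⟩
  have h1 := Finset.sum_subset himsub hzero
  have h2 : ∑ x ∈ (Finset.range (n/2+1)).image (fun k => n - 2*k), ff n x
      = ∑ k ∈ Finset.range (n/2+1), ff n (n - 2*k) := by
    apply Finset.sum_image
    intro a ha b hb hab
    rw [Finset.mem_coe, Finset.mem_range] at ha hb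
    dsimp only at hab
    omega
  rw [← h1, h2, ff_partial_sum n (n/2) (by omega)]

end Count2

open Classical in
lemma card_good (n : ℕ) :
    (Finset.univ.filter (fun w : Fin n → Bool => good n w)).card = Nat.choose n (n/2) := by
  classical
  have hfib := Finset.card_eq_sum_card_fiberwise
    (f := fun w : Fin n → Bool => (SS n w n).toNat)
    (s := Finset.univ.filter (fun w => good n w)) (t := Finset.range (n+1))
    (by
      intro w hw
      rw [Finset.mem_coe, Finset.mem_filter] at hw
      rw [Finset.mem_coe, Finset.mem_range]
      dsimp only
      have h1 := hw.2 n
      have h2 := SS_le (n := n) (w := w) n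
      omega)
  rw [hfib, ← ff_total_sum n]
  apply Finset.sum_congr rfl
  intro h _
  rw [← card_A_eq_ff n h]
  congr 1
  rw [A, Finset.filter_filter]
  apply Finset.filter_congr
  intro w _
  constructor
  · rintro ⟨hg, hS⟩
    have := hg n
    exact ⟨hg, by omega⟩
  · rintro ⟨hg, hS⟩
    exact ⟨hg, by omega⟩

end NCSPaux

theorem stmt_11 (n : ℕ) :
    {M : Finset (Finset ℤ) | IsNCSP n M}.ncard = Nat.choose n (n / 2) := by
  classical
  have himg : NCSPaux.Phi n '' {w : Fin n → Bool | NCSPaux.good n w}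
      = {M : Finset (Finset ℤ) | IsNCSP n M} := by
    ext M
    constructor
    · rintro ⟨w, hw, rfl⟩
      exact NCSPaux.Phi_isNCSP hw
    · intro hM
      obtain ⟨w, hg, hP⟩ := NCSPaux.Phi_surj hM
      exact ⟨w, hg, hP⟩
  have hinj : Set.InjOn (NCSPaux.Phi n) {w : Fin n → Bool | NCSPaux.good n w} := by
    intro w hw w' hw' h
    exact NCSPaux.Phi_injOn hw hw' h
  rw [← himg, Set.ncard_image_of_injOn hinj]
  have hset : {w : Fin n → Bool | NCSPaux.good n w}
      = ↑(Finset.univ.filter (fun w : Fin n → Bool => NCSPaux.good n w)) := by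
    ext w
    rw [Finset.mem_coe, Finset.mem_filter]
    simp [NCSPaux.good]
  rw [hset, Set.ncard_coe_finset, NCSPaux.card_good]
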